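/- Let T be the 18-dimensional real vector space of triples B = (B¹, B², B³) of antisymmetric real 4×4 matrices, and define the linear operator J₂ : T → T by J₂(B)ⁱ := (1/2) ∑_{j,k} ε^{ijk} (Sʲ Bᵏ − Bᵏ Sʲ). Then J₂ satisfies the polynomial identity J₂⁴ − 2 J₂³ − J₂² + 2 J₂ = 0, i.e. J₂ ∘ (J₂ − 2·id) ∘ (J₂ − id) ∘ (J₂ + id) = 0. -/
import Mathlib


open Matrix BigOperators

/-- Levi-Civita symbol on three indices, `ε 0 1 2 = 1`. -/
noncomputable def eps3 (i j k : Fin 3) : ℝ :=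
  Matrix.det (Matrix.of fun a b => if ![i, j, k] a = b then (1 : ℝ) else 0)

/-- The canonical matrices `S¹, S², S³`. -/
def Scan : Fin 3 → Matrix (Fin 4) (Fin 4) ℝ :=
  ![!![0, 0, 0, -1; 0, 0, -1, 0; 0, 1, 0, 0; 1, 0, 0, 0],
    !![0, 0, 1, 0; 0, 0, 0, -1; -1, 0, 0, 0; 0, 1, 0, 0],
    !![0, -1, 0, 0; 1, 0, 0, 0; 0, 0, 0, -1; 0, 0, 1, 0]]

/-- The operator `J₂` on triples of (antisymmetric) 4×4 matrices:
`J₂(B)ⁱ = (1/2) ∑_{jk} ε^{ijk} (Sʲ Bᵏ − Bᵏ Sʲ)`, the coordinate form of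
`J₂(B)ⁱ_{μν} = ε^{ijk} Σʲ_{[μ}{}^α Bᵏ_{|α|ν]}`. -/
noncomputable def J2 (B : Fin 3 → Matrix (Fin 4) (Fin 4) ℝ) :
    Fin 3 → Matrix (Fin 4) (Fin 4) ℝ :=
  fun i => (1 / 2 : ℝ) • ∑ j, ∑ k, eps3 i j k • (Scan j * B k - B k * Scan j)

/-- A generic antisymmetric triple built from 18 coordinate functions. -/
def Agen (p q r s t u : Fin 3 → ℝ) : Fin 3 → Matrix (Fin 4) (Fin 4) ℝ :=
  fun k => !![0, p k, q k, r k; -p k, 0, s k, t k; -q k, -s k, 0, u k; -r k, -t k, -u k, 0]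

theorem mul_fin_four {α} [AddCommMonoid α] [Mul α]
    (a₁₁ a₁₂ a₁₃ a₁₄ a₂₁ a₂₂ a₂₃ a₂₄ a₃₁ a₃₂ a₃₃ a₃₄ a₄₁ a₄₂ a₄₃ a₄₄
     b₁₁ b₁₂ b₁₃ b₁₄ b₂₁ b₂₂ b₂₃ b₂₄ b₃₁ b₃₂ b₃₃ b₃₄ b₄₁ b₄₂ b₄₃ b₄₄ : α) :
    !![a₁₁, a₁₂, a₁₃, a₁₄; a₂₁, a₂₂, a₂₃, a₂₄; a₃₁, a₃₂, a₃₃, a₃₄; a₄₁, a₄₂, a₄₃, a₄₄] *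
    !![b₁₁, b₁₂, b₁₃, b₁₄; b₂₁, b₂₂, b₂₃, b₂₄; b₃₁, b₃₂, b₃₃, b₃₄; b₄₁, b₄₂, b₄₃, b₄₄] =
    !![a₁₁*b₁₁ + a₁₂*b₂₁ + a₁₃*b₃₁ + a₁₄*b₄₁, a₁₁*b₁₂ + a₁₂*b₂₂ + a₁₃*b₃₂ + a₁₄*b₄₂,
       a₁₁*b₁₃ + a₁₂*b₂₃ + a₁₃*b₃₃ + a₁₄*b₄₃, a₁₁*b₁₄ + a₁₂*b₂₄ + a₁₃*b₃₄ + a₁₄*b₄₄;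
       a₂₁*b₁₁ + a₂₂*b₂₁ + a₂₃*b₃₁ + a₂₄*b₄₁, a₂₁*b₁₂ + a₂₂*b₂₂ + a₂₃*b₃₂ + a₂₄*b₄₂,
       a₂₁*b₁₃ + a₂₂*b₂₃ + a₂₃*b₃₃ + a₂₄*b₄₃, a₂₁*b₁₄ + a₂₂*b₂₄ + a₂₃*b₃₄ + a₂₄*b₄₄;
       a₃₁*b₁₁ + a₃₂*b₂₁ + a₃₃*b₃₁ + a₃₄*b₄₁, a₃₁*b₁₂ + a₃₂*b₂₂ + a₃₃*b₃₂ + a₃₄*b₄₂,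
       a₃₁*b₁₃ + a₃₂*b₂₃ + a₃₃*b₃₃ + a₃₄*b₄₃, a₃₁*b₁₄ + a₃₂*b₂₄ + a₃₃*b₃₄ + a₃₄*b₄₄;
       a₄₁*b₁₁ + a₄₂*b₂₁ + a₄₃*b₃₁ + a₄₄*b₄₁, a₄₁*b₁₂ + a₄₂*b₂₂ + a₄₃*b₃₂ + a₄₄*b₄₂,
       a₄₁*b₁₃ + a₄₂*b₂₃ + a₄₃*b₃₃ + a₄₄*b₄₃, a₄₁*b₁₄ + a₄₂*b₂₄ + a₄₃*b₃₄ + a₄₄*b₄₄] := by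
  ext i j
  fin_cases i <;> fin_cases j <;>
    simp [Matrix.mul_apply, Fin.sum_univ_succ, ← add_assoc]

lemma J2_eq (B : Fin 3 → Matrix (Fin 4) (Fin 4) ℝ) : J2 B =
  ![ (1/2:ℝ) • (Scan 1 * B 2 - B 2 * Scan 1 - (Scan 2 * B 1 - B 1 * Scan 2)),
     (1/2:ℝ) • (Scan 2 * B 0 - B 0 * Scan 2 - (Scan 0 * B 2 - B 2 * Scan 0)),
     (1/2:ℝ) • (Scan 0 * B 1 - B 1 * Scan 0 - (Scan 1 * B 0 - B 0 * Scan 1)) ] := by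
  funext i
  fin_cases i <;>
    simp [J2, eps3, Fin.sum_univ_three, Matrix.det_fin_three, Matrix.of_apply] <;>
    module

set_option maxHeartbeats 4000000 in
lemma J2_explicit (p q r s t u : Fin 3 → ℝ) :
    J2 (Agen p q r s t u) = Agen
      ![-(1/2)*r 2 - (1/2)*s 2, (1/2)*q 2 - (1/2)*t 2, -(1/2)*q 1 + (1/2)*r 0 + (1/2)*s 0 + (1/2)*t 1]
      ![(1/2)*r 1 + (1/2)*s 1, -(1/2)*p 2 - (1/2)*r 0 - (1/2)*s 0 - (1/2)*u 2, (1/2)*p 1 + (1/2)*u 1]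
      ![(1/2)*p 2 - (1/2)*q 1 + (1/2)*t 1 + (1/2)*u 2, (1/2)*q 0 - (1/2)*t 0, -(1/2)*p 0 - (1/2)*u 0]
      ![(1/2)*p 2 - (1/2)*q 1 + (1/2)*t 1 + (1/2)*u 2, (1/2)*q 0 - (1/2)*t 0, -(1/2)*p 0 - (1/2)*u 0]
      ![-(1/2)*r 1 - (1/2)*s 1, (1/2)*p 2 + (1/2)*r 0 + (1/2)*s 0 + (1/2)*u 2, -(1/2)*p 1 - (1/2)*u 1]
      ![-(1/2)*r 2 - (1/2)*s 2, (1/2)*q 2 - (1/2)*t 2, -(1/2)*q 1 + (1/2)*r 0 + (1/2)*s 0 + (1/2)*t 1] := by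
  funext i
  fin_cases i <;>
  · simp only [J2_eq]
    simp only [Agen, Scan, Matrix.cons_val_zero, Matrix.cons_val_one, Matrix.head_cons,
      Matrix.cons_val_two, Matrix.tail_cons, mul_fin_four]
    ext μ ν
    fin_cases μ <;> fin_cases ν <;> simp <;> ring

set_option maxHeartbeats 4000000 in
/-- on antisymmetric triples, `J₂` satisfies the polynomial
identity `J₂⁴ − 2J₂³ − J₂² + 2J₂ = 0`, i.e. `J₂(J₂−2)(J₂−1)(J₂+1) = 0`. -/
theorem J2_polynomial_identity
    (B : Fin 3 → Matrix (Fin 4) (Fin 4) ℝ)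
    (hanti : ∀ i, (B i)ᵀ = -B i) :
    J2 (J2 (J2 (J2 B))) - (2 : ℝ) • J2 (J2 (J2 B)) - J2 (J2 B) + (2 : ℝ) • J2 B
      = 0 := by
  have h : ∀ k (a b : Fin 4), B k b a = -B k a b := fun k a b => by
    simpa using congrFun (congrFun (hanti k) a) b
  have hB : B = Agen (fun k => B k 0 1) (fun k => B k 0 2) (fun k => B k 0 3)
      (fun k => B k 1 2) (fun k => B k 1 3) (fun k => B k 2 3) := by
    funext k
    ext μ ν
    fin_cases μ <;> fin_cases ν <;>
      simp [Agen] <;>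
      linarith [h k 0 1, h k 0 2, h k 0 3, h k 1 2, h k 1 3, h k 2 3,
        h k 0 0, h k 1 1, h k 2 2, h k 3 3]
  rw [hB, J2_explicit, J2_explicit, J2_explicit, J2_explicit]
  funext k
  ext μ ν
  fin_cases k <;> fin_cases μ <;> fin_cases ν <;> simp [Agen] <;> ring
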